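/- For all integers n_1, n_2 ≥ 1, every arrangement A of an n_1 × n_2 matrix has spread(A) ≥ max{ ⌈n_1/2⌉ · n_2, n_1 · ⌈n_2/2⌉ } − 1. -/

import Mathlib

/-- The spread of an arrangement of an `n₁ × n₂` matrix (a bijection from cells
to `{0,…,n₁n₂ − 1}`, a zero-based version of `{1,…,n₁n₂}`): the maximum
difference of values over all pairs of cells in a common row or column. -/
def spread2 {n₁ n₂ : ℕ} (A : Fin n₁ × Fin n₂ ≃ Fin (n₁ * n₂)) : ℕ :=
  Finset.sup Finset.univ
    (fun p : (Fin n₁ × Fin n₂) × (Fin n₁ × Fin n₂) =>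
      if p.1.1 = p.2.1 ∨ p.1.2 = p.2.2 then Nat.dist (A p.1) (A p.2) else 0)

theorem dist_le_spread2' {n₁ n₂ : ℕ} (A : Fin n₁ × Fin n₂ ≃ Fin (n₁ * n₂))
    (x y : Fin n₁ × Fin n₂) (h : x.1 = y.1 ∨ x.2 = y.2) :
    Nat.dist (A x) (A y) ≤ spread2 A := by
  have h2 := Finset.le_sup (f := fun p : (Fin n₁ × Fin n₂) × (Fin n₁ × Fin n₂) =>
      if p.1.1 = p.2.1 ∨ p.1.2 = p.2.2 then Nat.dist (A p.1) (A p.2) else 0)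
    (Finset.mem_univ (x, y))
  rw [spread2]
  simpa only [if_pos h] using h2

theorem spread2_key {n₁ n₂ : ℕ} (h₁ : 1 ≤ n₁) (h₂ : 1 ≤ n₂)
    (A : Fin n₁ × Fin n₂ ≃ Fin (n₁ * n₂)) :
    (n₁ + 1) / 2 * n₂ - 1 ≤ spread2 A := by
  classical
  set s := spread2 A with hs
  set a := (n₁ + 1) / 2 with ha
  set b := n₁ / 2 with hb
  have hab : a + b = n₁ := by omega
  have ha1 : 1 ≤ a := by omega
  have hN : 0 < n₁ * n₂ := Nat.mul_pos h₁ h₂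
  haveI : Nonempty (Fin n₂) := ⟨⟨0, h₂⟩⟩
  set m : Fin n₁ → ℕ := fun i =>
    Finset.inf' Finset.univ Finset.univ_nonempty (fun j => ((A (i, j)) : ℕ)) with hm
  have hm_le : ∀ i j, m i ≤ (A (i, j) : ℕ) := fun i j =>
    Finset.inf'_le _ (Finset.mem_univ j)
  have hm_mem : ∀ i, ∃ j, m i = (A (i, j) : ℕ) := by
    intro i
    obtain ⟨j, _, hj⟩ := Finset.exists_mem_eq_inf' (Finset.univ_nonempty)
      (fun j => ((A (i, j)) : ℕ))
    exact ⟨j, hj⟩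
  -- the threshold M
  have hPne : (n₁ * n₂ - 1) ∈ {x : ℕ | a ≤ (Finset.univ.filter (fun i => m i ≤ x)).card} := by
    have hfil : (Finset.univ.filter (fun i : Fin n₁ => m i ≤ n₁ * n₂ - 1)) = Finset.univ := by
      apply Finset.filter_true_of_mem
      intro i _
      obtain ⟨j, hj⟩ := hm_mem i
      have := (A (i, j)).isLt
      omega
    show a ≤ _
    rw [hfil, Finset.card_univ, Fintype.card_fin]
    omega
  set M := sInf {x : ℕ | a ≤ (Finset.univ.filter (fun i => m i ≤ x)).card} with hMdef
  have hMmem : a ≤ (Finset.univ.filter (fun i => m i ≤ M)).card :=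
    Nat.sInf_mem (⟨_, hPne⟩ : Set.Nonempty _)
  have hMle : M ≤ n₁ * n₂ - 1 := Nat.sInf_le hPne
  have hMltN : M < n₁ * n₂ := by omega
  set R : Finset (Fin n₁) := Finset.univ.filter (fun i => m i ≤ M) with hR
  set R' : Finset (Fin n₁) := Finset.univ.filter (fun i => m i < M) with hR'
  set C : Finset (Fin n₂) := Finset.univ.filter (fun j => ∃ i, (A (i, j) : ℕ) ≤ M) with hC
  have hRa : a ≤ R.card := hMmem
  have hR'a : R'.card + 1 ≤ a := by
    rcases Nat.eq_zero_or_pos M with h0 | h0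
    · have : R' = ∅ := by
        apply Finset.filter_false_of_mem
        intro i _
        omega
      rw [this]
      simpa using ha1
    · have hnot : (M - 1) ∉ {x : ℕ | a ≤ (Finset.univ.filter (fun i => m i ≤ x)).card} :=
        Nat.notMem_of_lt_sInf (by omega)
      have hflt : R' = Finset.univ.filter (fun i => m i ≤ M - 1) := by
        apply Finset.filter_congr
        intro i _
        omega
      rw [hflt]
      have hnot' : ¬ a ≤ (Finset.univ.filter (fun i => m i ≤ M - 1)).card := hnot
      omega
  -- M ≤ R'.card * C.card
  have hMc : M ≤ R'.card * C.card := by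
    have hcard : (Finset.range M).card ≤ (R' ×ˢ C).card := by
      apply Finset.card_le_card_of_injOn
        (fun v => A.symm ⟨v % (n₁ * n₂), Nat.mod_lt _ hN⟩)
      · intro v hv
        rw [Finset.mem_coe, Finset.mem_range] at hv
        beta_reduce
        have hvN : v < n₁ * n₂ := by omega
        have hmod : v % (n₁ * n₂) = v := Nat.mod_eq_of_lt hvN
        set z := A.symm ⟨v % (n₁ * n₂), Nat.mod_lt _ hN⟩ with hz
        have hAz : (A z : ℕ) = v := by
          rw [hz, Equiv.apply_symm_apply]
          exact hmod
        rw [Finset.mem_coe, Finset.mem_product]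
        constructor
        · rw [hR', Finset.mem_filter]
          refine ⟨Finset.mem_univ _, ?_⟩
          have h4 := hm_le z.1 z.2
          rw [Prod.mk.eta] at h4
          omega
        · rw [hC, Finset.mem_filter]
          refine ⟨Finset.mem_univ _, ⟨z.1, ?_⟩⟩
          have h4 : A (z.1, z.2) = A z := by rw [Prod.mk.eta]
          rw [h4]
          omega
      · intro v hv w hw hvw
        simp only [Finset.coe_range, Set.mem_Iio] at hv hw
        have h3 := congrArg (fun q => ((A q) : ℕ)) hvw
        simp only [Equiv.apply_symm_apply] at h3
        rw [Nat.mod_eq_of_lt (by omega : v < n₁ * n₂),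
          Nat.mod_eq_of_lt (by omega : w < n₁ * n₂)] at h3
        exact h3
    rwa [Finset.card_range, Finset.card_product] at hcard
  -- the cross union
  set U : Finset (Fin n₁ × Fin n₂) :=
    R ×ˢ (Finset.univ : Finset (Fin n₂)) ∪ ((Finset.univ : Finset (Fin n₁)) \ R) ×ˢ C with hU
  have hUval : ∀ z ∈ U, (A z : ℕ) ≤ M + s := by
    intro z hz
    rw [hU, Finset.mem_union] at hz
    rcases hz with hz | hz
    · rw [Finset.mem_product, hR, Finset.mem_filter] at hz
      obtain ⟨⟨_, hmi⟩, _⟩ := hz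
      obtain ⟨j₀, hj₀⟩ := hm_mem z.1
      have hd : Nat.dist (A (z.1, j₀)) (A z) ≤ s := by
        apply dist_le_spread2' A (z.1, j₀) z
        left; rfl
      simp only [Nat.dist] at hd
      omega
    · rw [Finset.mem_product, hC, Finset.mem_filter] at hz
      obtain ⟨_, _, i', hi'⟩ := hz
      have hd : Nat.dist (A (i', z.2)) (A z) ≤ s := by
        apply dist_le_spread2' A (i', z.2) z
        right; rfl
      simp only [Nat.dist] at hd
      omega
  have hUcardle : U.card ≤ M + s + 1 := by
    have hcc : U.card ≤ (Finset.range (M + s + 1)).card := by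
      apply Finset.card_le_card_of_injOn (fun z => (A z : ℕ))
      · intro z hz
        simp only [Finset.mem_coe, Finset.mem_range]
        have := hUval z hz
        omega
      · intro z _ w _ hzw
        exact A.injective (Fin.val_injective hzw)
    rwa [Finset.card_range] at hcc
  have hdisj : Disjoint (R ×ˢ (Finset.univ : Finset (Fin n₂)))
      (((Finset.univ : Finset (Fin n₁)) \ R) ×ˢ C) := by
    rw [Finset.disjoint_left]
    intro z hz hz'
    rw [Finset.mem_product] at hz hz'
    exact (Finset.mem_sdiff.mp hz'.1).2 hz.1
  have hUcard : U.card = R.card * n₂ + (n₁ - R.card) * C.card := by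
    rw [hU, Finset.card_union_of_disjoint hdisj, Finset.card_product, Finset.card_product,
      Finset.card_sdiff_of_subset (Finset.subset_univ R), Finset.card_univ, Finset.card_univ,
      Fintype.card_fin, Fintype.card_fin]
  have hRn : R.card ≤ n₁ := by
    have := Finset.card_le_univ R
    simpa using this
  have hCn : C.card ≤ n₂ := by
    have := Finset.card_le_univ C
    simpa using this
  set r := R.card with hrdef
  set c := C.card with hcdef
  have hMbc : M ≤ b * c := by
    have hml : R'.card * c ≤ b * c := Nat.mul_le_mul_right c (by omega)
    omega
  have h5 : a * n₂ + b * c ≤ r * n₂ + (n₁ - r) * c := by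
    obtain ⟨d, hd⟩ : ∃ d, r = a + d := ⟨r - a, by omega⟩
    have he : n₁ - r = b - d := by omega
    have hdb : d ≤ b := by omega
    rw [he, hd]
    have hdc : d * c ≤ d * n₂ := Nat.mul_le_mul_left d hCn
    have hsplit : b = d + (b - d) := by omega
    calc a * n₂ + b * c = a * n₂ + (d + (b - d)) * c := by rw [← hsplit]
      _ = (a * n₂ + (b - d) * c) + d * c := by ring
      _ ≤ (a * n₂ + (b - d) * c) + d * n₂ := by omega
      _ = (a + d) * n₂ + (b - d) * c := by ring
  have hfin : a * n₂ + b * c ≤ M + s + 1 := by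
    calc a * n₂ + b * c ≤ r * n₂ + (n₁ - r) * c := h5
      _ = U.card := hUcard.symm
      _ ≤ M + s + 1 := hUcardle
  omega

theorem spread2_lower_bound (n₁ n₂ : ℕ) (h₁ : 1 ≤ n₁) (h₂ : 1 ≤ n₂)
    (A : Fin n₁ × Fin n₂ ≃ Fin (n₁ * n₂)) :
    max ((n₁ + 1) / 2 * n₂) (n₁ * ((n₂ + 1) / 2)) - 1 ≤ spread2 A := by
  have k1 := spread2_key h₁ h₂ A
  set A' : Fin n₂ × Fin n₁ ≃ Fin (n₂ * n₁) :=
    (Equiv.prodComm (Fin n₂) (Fin n₁)).trans (A.trans (finCongr (mul_comm n₁ n₂))) with hA'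
  have k2 := spread2_key h₂ h₁ A'
  have hle : spread2 A' ≤ spread2 A := by
    apply Finset.sup_le
    intro p _
    by_cases h : p.1.1 = p.2.1 ∨ p.1.2 = p.2.2
    · rw [if_pos h]
      have hval : ∀ q : Fin n₂ × Fin n₁, (A' q : ℕ) = (A (q.2, q.1) : ℕ) := by
        intro q
        simp [hA', Equiv.prodComm, Prod.swap]
      have hdd : Nat.dist (A' p.1) (A' p.2) =
          Nat.dist (A (p.1.2, p.1.1)) (A (p.2.2, p.2.1)) := by
        rw [Nat.dist, Nat.dist, hval p.1, hval p.2]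
      rw [hdd]
      exact dist_le_spread2' A _ _ (Or.symm h)
    · rw [if_neg h]
      exact Nat.zero_le _
  have k2' : n₁ * ((n₂ + 1) / 2) - 1 ≤ spread2 A := by
    calc n₁ * ((n₂ + 1) / 2) - 1 = (n₂ + 1) / 2 * n₁ - 1 := by rw [mul_comm]
      _ ≤ spread2 A' := k2
      _ ≤ spread2 A := hle
  rcases max_cases ((n₁ + 1) / 2 * n₂) (n₁ * ((n₂ + 1) / 2)) with ⟨h, _⟩ | ⟨h, _⟩ <;> rw [h]
  · exact k1
  · exact k2'
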